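/- With f_{r,n} := (∑_{q} C(r+kq+n,n) q ε^{2q}) / (∑_{q} C(r+kq+n,n) ε^{2q}) and F := ε^{2/k}, the asymptotic formula holds: f_{r,n} − ( F/(k(1−F)) · n + F/(k(1−F)) − r/k ) → 0 as n → ∞. -/

import Mathlib

open Filter

noncomputable section

open Finset Complex in
/-- Norm bound: for `z` on the unit circle, `z ≠ 1`, `0 < F < 1`, we have `1 - F < ‖1 - z F‖`. -/
lemma aux_norm_lt {z : ℂ} (habs : ‖z‖ = 1) (hz1 : z ≠ 1)
    {F : ℝ} (hF0 : 0 < F) : 1 - F < ‖1 - z * (F : ℂ)‖ := by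
  have hz2 : z.re ^ 2 + z.im ^ 2 = 1 := by
    have := Complex.sq_norm z
    rw [habs] at this
    simpa [Complex.normSq_apply, sq] using this.symm
  have hre : z.re < 1 := by
    rcases lt_or_eq_of_le ((Complex.re_le_norm z).trans habs.le) with h | h
    · exact h
    · exfalso
      apply hz1
      have him : z.im = 0 := by nlinarith [sq_nonneg z.im]
      exact Complex.ext (by simp [h]) (by simp [him])
  have hnormSq : Complex.normSq (1 - z * (F : ℂ)) = (1 - z.re * F) ^ 2 + (z.im * F) ^ 2 := by
    simp [Complex.normSq_apply, Complex.sub_re, Complex.sub_im, Complex.mul_re, Complex.mul_im]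
    ring
  have hlt : (1 - F) ^ 2 < ‖1 - z * (F : ℂ)‖ ^ 2 := by
    rw [Complex.sq_norm, hnormSq]
    nlinarith [sq_nonneg z.im]
  exact lt_of_pow_lt_pow_left₀ 2 (norm_nonneg _) hlt

/-- Characterization of `ζ^m = ζ^r` for a primitive `k`-th root of unity with `r < k`. -/
lemma aux_pow_eq {k r : ℕ} (hk : 0 < k) (hrk : r < k) {ζ : ℂ} (hζ : IsPrimitiveRoot ζ k)
    (m : ℕ) : ζ ^ m = ζ ^ r ↔ ∃ q : ℕ, m = r + k * q := by
  have hζ0 : ζ ≠ 0 := hζ.ne_zero hk.ne'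
  constructor
  · intro h
    rcases le_or_gt r m with hle | hlt
    · have h1 : ζ ^ r * ζ ^ (m - r) = ζ ^ r * 1 := by
        rw [mul_one, ← pow_add, Nat.add_sub_cancel' hle]
        exact h
      have h2 : ζ ^ (m - r) = 1 := mul_left_cancel₀ (pow_ne_zero _ hζ0) h1
      obtain ⟨t, ht⟩ := (hζ.pow_eq_one_iff_dvd _).mp h2
      exact ⟨t, by omega⟩
    · have h1 : ζ ^ m * ζ ^ (r - m) = ζ ^ m * 1 := by
        rw [mul_one, ← pow_add, Nat.add_sub_cancel' hlt.le]
        exact h.symm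
      have h2 : ζ ^ (r - m) = 1 := mul_left_cancel₀ (pow_ne_zero _ hζ0) h1
      have h3 := (hζ.pow_eq_one_iff_dvd _).mp h2
      have h4 : r - m = 0 := Nat.eq_zero_of_dvd_of_lt h3 (by omega)
      omega
  · rintro ⟨q, rfl⟩
    rw [pow_add, pow_mul, hζ.pow_eq_one, one_pow, mul_one]


open Finset Complex in
/-- The roots-of-unity-filtered binomial series. -/
lemma aux_filter_hasSum {k r : ℕ} (hk : 0 < k) (hrk : r < k) {ζ : ℂ}
    (hζ : IsPrimitiveRoot ζ k) (hζnorm : ∀ j : ℕ, ‖ζ ^ j‖ = 1)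
    {F : ℝ} (hF0 : 0 < F) (hF1 : F < 1) (n : ℕ) :
    HasSum (fun q : ℕ => (((r + k * q + n).choose n : ℝ) : ℂ) * (F : ℂ) ^ (r + k * q))
      (∑ j ∈ range k, 1 / (1 - ζ ^ j * (F : ℂ)) ^ (n + 1) * (((ζ ^ j)⁻¹) ^ r / (k : ℂ))) := by
  have hζ0 : ζ ≠ 0 := hζ.ne_zero hk.ne'
  have hk0 : (k : ℂ) ≠ 0 := Nat.cast_ne_zero.mpr hk.ne'
  -- per-j series
  have hj : ∀ j ∈ range k,
      HasSum (fun m : ℕ => (((m + n).choose n : ℝ) : ℂ) * (ζ ^ j * (F : ℂ)) ^ m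
          * (((ζ ^ j)⁻¹) ^ r / (k : ℂ)))
        (1 / (1 - ζ ^ j * (F : ℂ)) ^ (n + 1) * (((ζ ^ j)⁻¹) ^ r / (k : ℂ))) := by
    intro j _
    have hlt : ‖ζ ^ j * (F : ℂ)‖ < 1 := by
      rw [norm_mul, hζnorm j, one_mul, Complex.norm_real,
        Real.norm_eq_abs, abs_of_pos hF0]
      exact hF1
    have := hasSum_choose_mul_geometric_of_norm_lt_one (𝕜 := ℂ) n hlt
    exact this.mul_right _
  have hsum := hasSum_sum hj
  -- rewrite the summed function as an indicator function
  have hfun : (fun m : ℕ => ∑ j ∈ range k,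
      (((m + n).choose n : ℝ) : ℂ) * (ζ ^ j * (F : ℂ)) ^ m * (((ζ ^ j)⁻¹) ^ r / (k : ℂ)))
      = fun m : ℕ => (((m + n).choose n : ℝ) : ℂ) * (F : ℂ) ^ m *
          (if ζ ^ m = ζ ^ r then 1 else 0) := by
    funext m
    have h1 : ∀ j, (((m + n).choose n : ℝ) : ℂ) * (ζ ^ j * (F : ℂ)) ^ m
        * (((ζ ^ j)⁻¹) ^ r / (k : ℂ))
        = (((m + n).choose n : ℝ) : ℂ) * (F : ℂ) ^ m / (k : ℂ) * (ζ ^ m * (ζ ^ r)⁻¹) ^ j := by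
      intro j
      rw [mul_pow, mul_pow]
      rw [show (ζ ^ j) ^ m = (ζ ^ m) ^ j by rw [← pow_mul, ← pow_mul, Nat.mul_comm],
        show ((ζ ^ j)⁻¹) ^ r = ((ζ ^ r)⁻¹) ^ j by
          rw [← inv_pow, ← inv_pow, ← pow_mul, ← pow_mul, Nat.mul_comm],
        inv_pow]
      field_simp
    rw [Finset.sum_congr rfl fun j _ => h1 j, ← Finset.mul_sum]
    by_cases hcase : ζ ^ m = ζ ^ r
    · rw [if_pos hcase, hcase, mul_inv_cancel₀ (pow_ne_zero _ hζ0)]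
      simp only [one_pow, Finset.sum_const, card_range, nsmul_eq_mul, mul_one]
      field_simp
    · rw [if_neg hcase]
      have hx1 : ζ ^ m * (ζ ^ r)⁻¹ ≠ 1 := by
        intro h
        exact hcase (by field_simp at h; exact h)
      rw [geom_sum_eq hx1]
      have hxk : (ζ ^ m * (ζ ^ r)⁻¹) ^ k = 1 := by
        rw [mul_pow, inv_pow, ← pow_mul, ← pow_mul, Nat.mul_comm m k, Nat.mul_comm r k,
          pow_mul, pow_mul, hζ.pow_eq_one, one_pow, one_pow, inv_one, mul_one]
      rw [hxk]
      simp
  rw [hfun] at hsum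
  -- transfer to the arithmetic-progression index
  have hinj : Function.Injective (fun q : ℕ => r + k * q) := by
    intro a b h
    simp only at h
    exact Nat.eq_of_mul_eq_mul_left hk (by omega)
  have hvanish : ∀ m ∉ Set.range (fun q : ℕ => r + k * q),
      (((m + n).choose n : ℝ) : ℂ) * (F : ℂ) ^ m * (if ζ ^ m = ζ ^ r then 1 else 0) = 0 := by
    intro m hm
    rw [if_neg, mul_zero]
    intro hc
    obtain ⟨q, hq⟩ := (aux_pow_eq hk hrk hζ m).mp hc
    exact hm ⟨q, hq.symm⟩
  have hres := (hinj.hasSum_iff hvanish).mpr hsum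
  have heq : ((fun m : ℕ => (((m + n).choose n : ℝ) : ℂ) * (F : ℂ) ^ m *
          (if ζ ^ m = ζ ^ r then 1 else 0)) ∘ (fun q : ℕ => r + k * q))
      = fun q : ℕ => (((r + k * q + n).choose n : ℝ) : ℂ) * (F : ℂ) ^ (r + k * q) := by
    funext q
    simp only [Function.comp]
    rw [if_pos ((aux_pow_eq hk hrk hζ _).mpr ⟨q, rfl⟩), mul_one]
  rw [heq] at hres
  exact hres

open Finset Complex in
/-- The key asymptotics for the denominator sums. -/
lemma aux_key (k : ℕ) (hk : 1 ≤ k) (r : ℕ) (hrk : r < k) (F : ℝ) (hF0 : 0 < F) (hF1 : F < 1) :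
    ∃ s : ℕ → ℝ,
      (∀ n, HasSum (fun q : ℕ => ((r + k * q + n).choose n : ℝ) * (F ^ k) ^ q) (s n)) ∧
      (∀ n, 1 ≤ s n) ∧
      Tendsto (fun n : ℕ => ((n : ℝ) + 1) * (s (n + 1) / s n - 1 / (1 - F))) atTop (nhds 0) := by
  have hk0 : (0 : ℕ) < k := hk
  have hkC : (k : ℂ) ≠ 0 := Nat.cast_ne_zero.mpr hk0.ne'
  have hFC : (F : ℂ) ≠ 0 := Complex.ofReal_ne_zero.mpr hF0.ne'
  have h1F : (0:ℝ) < 1 - F := by linarith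
  set ζ : ℂ := Complex.exp (2 * (Real.pi : ℂ) * I / (k : ℂ)) with hζdef
  have hζ : IsPrimitiveRoot ζ k := Complex.isPrimitiveRoot_exp k hk0.ne'
  have hζabs : ‖ζ‖ = 1 := by
    rw [hζdef, show (2 * (Real.pi : ℂ) * I / (k : ℂ)) = ((2 * Real.pi / k : ℝ) : ℂ) * I by
      push_cast; ring, Complex.norm_exp_ofReal_mul_I]
  have hζnorm : ∀ j : ℕ, ‖ζ ^ j‖ = 1 := by
    intro j; rw [norm_pow, hζabs, one_pow]
  -- denominators are nonzero
  have hden : ∀ j : ℕ, (1 : ℂ) - ζ ^ j * (F : ℂ) ≠ 0 := by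
    intro j
    have := aux_norm_lt (hζnorm j) (z := ζ ^ j)
    intro h
    rcases eq_or_ne (ζ ^ j) 1 with h1 | h1
    · rw [h1, one_mul] at h
      have : (1 : ℝ) - F = 0 := by
        have := congrArg Complex.re h
        simpa using this
      linarith
    · have hlt := aux_norm_lt (hζnorm j) h1 hF0
      rw [h] at hlt
      simp at hlt
      linarith
  -- the quotients θ j
  set θ : ℕ → ℂ := fun j => (1 - (F : ℂ)) / (1 - ζ ^ j * (F : ℂ)) with hθdef
  have hθ0 : θ 0 = 1 := by
    simp only [hθdef, pow_zero, one_mul]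
    exact div_self (by simpa using hden 0)
  have hθlt : ∀ j, j ≠ 0 → j < k → ‖θ j‖ < 1 := by
    intro j hj0 hjk
    have h1 : ζ ^ j ≠ 1 := hζ.pow_ne_one_of_pos_of_lt hj0 hjk
    have h2 := aux_norm_lt (hζnorm j) h1 hF0
    rw [hθdef]
    simp only [norm_div]
    rw [div_lt_one (lt_of_le_of_lt (by linarith) h2)]
    calc ‖1 - (F:ℂ)‖ = |1 - F| := by
          rw [show (1 : ℂ) - (F:ℂ) = ((1 - F : ℝ) : ℂ) by push_cast; ring, Complex.norm_real, Real.norm_eq_abs]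
      _ = 1 - F := abs_of_pos h1F
      _ < _ := h2
  -- weights
  set w : ℕ → ℂ := fun j => ((ζ ^ j)⁻¹) ^ r with hwdef
  -- the complex sequence u
  set u : ℕ → ℂ := fun n => ∑ j ∈ range k, θ j ^ (n + 1) * (w j / (k : ℂ)) / (F : ℂ) ^ r
    with hudef
  set c : ℕ → ℝ := fun n => (u n).re with hcdef
  set s : ℕ → ℝ := fun n => c n / (1 - F) ^ (n + 1) with hsdef
  -- the HasSum statements
  have hS : ∀ n, HasSum (fun q : ℕ => ((r + k * q + n).choose n : ℝ) * (F ^ k) ^ q) (s n) := by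
    intro n
    have h1 := aux_filter_hasSum hk0 hrk hζ hζnorm hF0 hF1 n
    have h2 := h1.div_const ((F : ℂ) ^ r)
    have h3 : (fun q : ℕ => (((r + k * q + n).choose n : ℝ) : ℂ) * (F : ℂ) ^ (r + k * q)
        / (F : ℂ) ^ r) = fun q : ℕ => ((((r + k * q + n).choose n : ℝ) * (F ^ k) ^ q : ℝ) : ℂ) := by
      funext q
      rw [pow_add]
      push_cast
      rw [pow_mul]
      field_simp
    rw [h3] at h2
    -- identify the value with s n
    have h4 : (∑ j ∈ range k, 1 / (1 - ζ ^ j * (F : ℂ)) ^ (n + 1) * (w j / (k : ℂ)))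
        / (F : ℂ) ^ r = (((1 - F) ^ (n + 1) : ℝ) : ℂ)⁻¹ * u n := by
      rw [hudef]
      simp only
      rw [Finset.sum_div, Finset.mul_sum]
      refine Finset.sum_congr rfl fun j _ => ?_
      have hcast : ((1 : ℂ) - (F : ℂ)) = (((1 - F : ℝ)) : ℂ) := by push_cast; ring
      have hθpow : θ j ^ (n + 1)
          = (((1 - F) ^ (n + 1) : ℝ) : ℂ) * (1 / (1 - ζ ^ j * (F : ℂ)) ^ (n + 1)) := by
        rw [hθdef]
        simp only
        rw [div_pow, hcast, ← Complex.ofReal_pow, div_eq_mul_one_div]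
      have hX : (((1 - F) ^ (n + 1) : ℝ) : ℂ) ≠ 0 :=
        Complex.ofReal_ne_zero.mpr (pow_ne_zero _ h1F.ne')
      rw [hθpow]
      have hre : (((1 - F) ^ (n + 1) : ℝ) : ℂ)⁻¹ * ((((1 - F) ^ (n + 1) : ℝ) : ℂ)
            * (1 / (1 - ζ ^ j * (F : ℂ)) ^ (n + 1)) * (w j / (k : ℂ)) / (F : ℂ) ^ r)
          = ((((1 - F) ^ (n + 1) : ℝ) : ℂ)⁻¹ * (((1 - F) ^ (n + 1) : ℝ) : ℂ))
            * (1 / (1 - ζ ^ j * (F : ℂ)) ^ (n + 1) * (w j / (k : ℂ)) / (F : ℂ) ^ r) := by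
        ring
      rw [hre, inv_mul_cancel₀ hX, one_mul]
    rw [h4] at h2
    have h5 := (Complex.hasSum_iff _ _).mp h2 |>.1
    have h6 : ((((1 - F) ^ (n + 1) : ℝ) : ℂ)⁻¹ * u n).re = s n := by
      rw [← Complex.ofReal_inv, Complex.re_ofReal_mul, hsdef]
      simp only
      rw [hcdef]
      rw [inv_mul_eq_div]
    rw [h6] at h5
    simpa only [Complex.ofReal_re] using h5
  have hs1 : ∀ n, 1 ≤ s n := by
    intro n
    have h1 := le_hasSum (hS n) 0 (fun j _ => by positivity)
    have h2 : (1 : ℝ) ≤ ((r + k * 0 + n).choose n : ℝ) * (F ^ k) ^ 0 := by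
      simp only [Nat.mul_zero, pow_zero, mul_one]
      exact_mod_cast Nat.one_le_iff_ne_zero.mpr (Nat.choose_pos (by omega : n ≤ r + 0 + n)).ne'
    linarith
  refine ⟨s, hS, hs1, ?_⟩
  -- the limit
  set L : ℝ := 1 / (k * F ^ r) with hLdef
  have hLpos : 0 < L := by rw [hLdef]; positivity
  have hLc : ((L : ℝ) : ℂ) = (1 / (k : ℂ)) / (F : ℂ) ^ r := by
    rw [hLdef]; push_cast; rw [div_div]
  -- limit of u
  have hu : Tendsto u atTop (nhds ((L : ℝ) : ℂ)) := by
    have hsum : ∑ j ∈ range k, (if j = 0 then ((L : ℝ) : ℂ) else 0) = ((L : ℝ) : ℂ) := by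
      rw [Finset.sum_ite_eq' (range k) 0 (fun _ => ((L : ℝ) : ℂ)),
        if_pos (Finset.mem_range.mpr hk0)]
    rw [hudef, ← hsum]
    apply tendsto_finset_sum
    intro j hj
    by_cases hj0 : j = 0
    · subst hj0
      rw [if_pos rfl]
      have : (fun n : ℕ => θ 0 ^ (n + 1) * (w 0 / (k : ℂ)) / (F : ℂ) ^ r)
          = fun _ : ℕ => ((L : ℝ) : ℂ) := by
        funext n
        rw [hθ0, one_pow, one_mul, hLc, hwdef]
        simp
      rw [this]
      exact tendsto_const_nhds
    · rw [if_neg hj0]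
      have h1 : ‖θ j‖ < 1 := by
        exact hθlt j hj0 (Finset.mem_range.mp hj)
      have h2 := tendsto_pow_atTop_nhds_zero_of_norm_lt_one h1
      have h3 := h2.comp (tendsto_add_atTop_nat 1)
      have h4 := (h3.mul_const (w j / (k : ℂ))).div_const ((F : ℂ) ^ r)
      simpa using h4
  have hc : Tendsto c atTop (nhds L) := by
    have := (Complex.continuous_re.tendsto _).comp hu
    simpa [hcdef, Function.comp_def] using this
  have hcpos : ∀ n, 0 < c n := by
    intro n
    have : c n = (1 - F) ^ (n + 1) * s n := by
      rw [hsdef]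
      field_simp
    rw [this]
    have := hs1 n
    positivity
  -- limit of (n+1)(u(n+1) - u n)
  have hdiffC : Tendsto (fun n : ℕ => ((n : ℂ) + 1) * (u (n + 1) - u n)) atTop (nhds 0) := by
    have hfun : (fun n : ℕ => ((n : ℂ) + 1) * (u (n + 1) - u n))
        = fun n : ℕ => ∑ j ∈ range k,
            ((n : ℂ) + 1) * θ j ^ (n + 1) * (θ j - 1) * (w j / (k : ℂ)) / (F : ℂ) ^ r := by
      funext n
      rw [hudef]
      simp only
      rw [← Finset.sum_sub_distrib, Finset.mul_sum]
      refine Finset.sum_congr rfl fun j _ => ?_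
      ring
    rw [hfun]
    have hzero : ∑ j ∈ range k, (0 : ℂ) = 0 := by simp
    rw [← hzero]
    apply tendsto_finset_sum
    intro j hj
    by_cases hj0 : j = 0
    · subst hj0
      have : (fun n : ℕ => ((n : ℂ) + 1) * θ 0 ^ (n + 1) * (θ 0 - 1) * (w 0 / (k : ℂ))
          / (F : ℂ) ^ r) = fun _ : ℕ => (0 : ℂ) := by
        funext n
        rw [hθ0]
        simp
      rw [this]
      exact tendsto_const_nhds
    · have h1 : ‖θ j‖ < 1 := by
        exact hθlt j hj0 (Finset.mem_range.mp hj)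
      have h2 := (summable_pow_mul_geometric_of_norm_lt_one 1 h1).tendsto_atTop_zero
      have h3 := h2.comp (tendsto_add_atTop_nat 1)
      have h4 := ((h3.mul_const (θ j - 1)).mul_const (w j / (k : ℂ))).div_const ((F : ℂ) ^ r)
      have h5 : (fun n : ℕ => ((n : ℂ) + 1) * θ j ^ (n + 1) * (θ j - 1) * (w j / (k : ℂ))
          / (F : ℂ) ^ r)
          = fun n : ℕ => ((fun m : ℕ => ((m : ℂ) ^ 1 * θ j ^ m)) ((fun a => a + 1) n) * (θ j - 1))
            * (w j / (k : ℂ)) / (F : ℂ) ^ r := by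
        funext n
        simp only
        push_cast
        ring
      rw [h5]
      simpa using h4
  -- limit of (n+1)(c(n+1) - c n)
  have hdiff : Tendsto (fun n : ℕ => ((n : ℝ) + 1) * (c (n + 1) - c n)) atTop (nhds 0) := by
    have hfun : (fun n : ℕ => ((n : ℝ) + 1) * (c (n + 1) - c n))
        = fun n : ℕ => (((n : ℂ) + 1) * (u (n + 1) - u n)).re := by
      funext n
      rw [hcdef]
      simp only
      rw [show ((n : ℂ) + 1) = (((n : ℝ) + 1 : ℝ) : ℂ) by push_cast; ring,
        Complex.re_ofReal_mul, Complex.sub_re]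
    rw [hfun]
    have := (Complex.continuous_re.tendsto _).comp hdiffC
    simpa only [Function.comp_def, Complex.zero_re] using this
  -- conclude
  have hfun2 : (fun n : ℕ => ((n : ℝ) + 1) * (s (n + 1) / s n - 1 / (1 - F)))
      = fun n : ℕ => (((n : ℝ) + 1) * (c (n + 1) - c n)) * ((1 - F) * c n)⁻¹ := by
    funext n
    have hcn := (hcpos n).ne'
    have hcn1 := (hcpos (n + 1)).ne'
    rw [hsdef]
    simp only
    rw [div_div_div_comm]
    field_simp
    ring
  rw [hfun2]
  have h2 : Tendsto (fun n : ℕ => ((1 - F) * c n)⁻¹) atTop (nhds ((1 - F) * L)⁻¹) :=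
    (tendsto_const_nhds.mul hc).inv₀ (by positivity)
  have := hdiff.mul h2
  simpa using this

/-- The frequency `f_{r,n} = (∑_q C(r+kq+n,n) q ε^{2q}) / (∑_q C(r+kq+n,n) ε^{2q})`. -/
def freq (k : ℕ) (ε : ℝ) (r n : ℕ) : ℝ :=
  (∑' q : ℕ, ((r + k * q + n).choose n : ℝ) * (q : ℝ) * ε ^ (2 * q)) /
    (∑' q : ℕ, ((r + k * q + n).choose n : ℝ) * ε ^ (2 * q))

/-- `f_{r,n} − (F/(k(1−F))·n + F/(k(1−F)) − r/k) → 0` as `n → ∞`,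
where `F = ε^{2/k}`. -/
theorem statement9 (k : ℕ) (hk : 1 ≤ k) (ε : ℝ) (hε0 : 0 < ε) (hε1 : ε < 1)
    (r : ℕ) (hr : r ≤ k - 1)
    (F : ℝ) (hF : F = ε ^ ((2 : ℝ) / (k : ℝ))) :
    Tendsto (fun n : ℕ =>
        freq k ε r n - (F / (k * (1 - F)) * n + F / (k * (1 - F)) - r / k))
      atTop (nhds 0) := by
  have hk0 : (0 : ℕ) < k := hk
  have hkR : ((k : ℝ)) ≠ 0 := Nat.cast_ne_zero.mpr hk0.ne'
  have hrk : r < k := by omega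
  have hF0 : 0 < F := hF ▸ Real.rpow_pos_of_pos hε0 _
  have hF1 : F < 1 := by
    rw [hF]
    exact Real.rpow_lt_one hε0.le hε1 (by positivity)
  have h1F : (0 : ℝ) < 1 - F := by linarith
  have hFk : F ^ k = ε ^ 2 := by
    rw [hF, ← Real.rpow_natCast (ε ^ ((2 : ℝ) / (k : ℝ))) k, ← Real.rpow_mul hε0.le,
      div_mul_cancel₀ _ hkR, show ((2 : ℝ)) = ((2 : ℕ) : ℝ) by norm_num, Real.rpow_natCast]
  obtain ⟨s, hS, hs1, hg⟩ := aux_key k hk r hrk F hF0 hF1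
  have hε2 : ∀ n : ℕ, (fun q : ℕ => ((r + k * q + n).choose n : ℝ) * ε ^ (2 * q))
      = fun q : ℕ => ((r + k * q + n).choose n : ℝ) * (F ^ k) ^ q := by
    intro n
    funext q
    rw [pow_mul, hFk]
  have hden : ∀ n, HasSum (fun q : ℕ => ((r + k * q + n).choose n : ℝ) * ε ^ (2 * q)) (s n) := by
    intro n
    rw [hε2 n]
    exact hS n
  have hnum : ∀ n, HasSum (fun q : ℕ => ((r + k * q + n).choose n : ℝ) * (q : ℝ) * ε ^ (2 * q))
      ((((n : ℝ) + 1) * s (n + 1) - ((r : ℝ) + n + 1) * s n) / k) := by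
    intro n
    have hA := (hS (n + 1)).mul_left ((n : ℝ) + 1)
    have hB := (hS n).mul_left ((r : ℝ) + (n : ℝ) + 1)
    have hres := (hA.sub hB).div_const (k : ℝ)
    have heq : (fun q : ℕ => (((n : ℝ) + 1) * (((r + k * q + (n + 1)).choose (n + 1) : ℝ)
          * (F ^ k) ^ q) - ((r : ℝ) + (n : ℝ) + 1) * (((r + k * q + n).choose n : ℝ)
          * (F ^ k) ^ q)) / (k : ℝ))
        = fun q : ℕ => ((r + k * q + n).choose n : ℝ) * (q : ℝ) * ε ^ (2 * q) := by
      funext q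
      have hcast : ((n : ℝ) + 1) * ((r + k * q + (n + 1)).choose (n + 1) : ℝ)
          = ((r : ℝ) + (k : ℝ) * q + n + 1) * ((r + k * q + n).choose n : ℝ) := by
        have := Nat.add_one_mul_choose_eq (r + k * q + n) n
        have h2 : (r + k * q + n + 1) * ((r + k * q + n).choose n)
            = ((r + k * q + (n + 1)).choose (n + 1)) * (n + 1) := by
          exact this
        have h3 := congrArg (fun m : ℕ => (m : ℝ)) h2
        push_cast at h3
        linarith
      have hkey : ((n : ℝ) + 1) * (((r + k * q + (n + 1)).choose (n + 1) : ℝ) * (F ^ k) ^ q)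
          - ((r : ℝ) + (n : ℝ) + 1) * (((r + k * q + n).choose n : ℝ) * (F ^ k) ^ q)
          = (k : ℝ) * (((r + k * q + n).choose n : ℝ) * (q : ℝ) * (F ^ k) ^ q) := by
        linear_combination (F ^ k) ^ q * hcast
      rw [hkey, mul_div_cancel_left₀ _ hkR, pow_mul, hFk]
    rwa [heq] at hres
  have hfreq : (fun n : ℕ =>
        freq k ε r n - (F / (k * (1 - F)) * n + F / (k * (1 - F)) - r / k))
      = fun n : ℕ => (((n : ℝ) + 1) * (s (n + 1) / s n - 1 / (1 - F))) / k := by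
    funext n
    have hsn : s n ≠ 0 := by have := hs1 n; linarith
    rw [freq, (hnum n).tsum_eq, (hden n).tsum_eq]
    field_simp
    ring
  rw [hfreq]
  have := hg.div_const (k : ℝ)
  simpa using this

end
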